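/- Fix Δ ≥ 1 and consider the two-node payment network with nodes v_1, v_2 and Δ parallel directed edges e_1, …, e_Δ from v_1 to v_2, with initial capital C_{v_1}(0) = C > 0 at v_1. For every deterministic online scheduling algorithm A and every ε > 0, there exists a transaction sequence t_1, …, t_n (each t_i routed from v_1 to v_2 through a single edge e_{j_i}, where e_{j_i} is an edge whose capacity under A just before time i is at most C_{v_1}(i)/Δ, with value v_i = C_{v_1}(i)/Δ + ε) such that any feasible response of A must perform at least one capacity modification at every time step 1, …, n; hence the step cost of A on this sequence is at least n. -/

import Mathlib

/-! Two-node payment-network scheduling model: nodes `v₁, v₂`, with `k` parallel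
directed edges `Fin k` from `v₁` to `v₂`; `v₁` has initial capital `W`.
Transaction `i` (for `i < n`, 0-indexed) is routed through the single edge `j i`
and has value `v i`.  A schedule is described by the capacities `c i e` available
on edge `e` when transaction `i` executes (together with the initial capacities
`c₀ e` holding before time `0`). -/

/-- Capital of node `v₁` available when transaction `i` executes:
`C_{v₁}(i) = W - Σ_{l < i} v l` (all transactions leave `v₁`). -/
def cap (W : ℝ) (v : ℕ → ℝ) (i : ℕ) : ℝ := W - ∑ l ∈ Finset.range i, v l

/-- Capacity of edge `e` just before the modifications of time `i`: the previous
capacity diminished by the value routed through `e` at time `i - 1`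
(`stale 0 = c₀`, the initial capacities). -/
def stale (k : ℕ) (c₀ : Fin k → ℝ) (j : ℕ → Fin k) (v : ℕ → ℝ)
    (c : ℕ → Fin k → ℝ) : ℕ → Fin k → ℝ
  | 0 => c₀
  | (i + 1) => fun e => c i e - (if j i = e then v i else 0)

/-- Feasibility of the schedule `c`: at each time `i < n` all capacities are
nonnegative, the edge `j i` used by transaction `i` has capacity at least `v i`,
and the total capacity of the edges leaving `v₁` is at most `v₁`'s capital. -/
def Feasible (k n : ℕ) (W : ℝ) (j : ℕ → Fin k) (v : ℕ → ℝ)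
    (c : ℕ → Fin k → ℝ) : Prop :=
  ∀ i < n, (∀ e, 0 ≤ c i e) ∧ v i ≤ c i (j i) ∧ (∑ e, c i e) ≤ cap W v i

/-- Edge `e` is modified at time `i` if the schedule sets its capacity to a value
different from its stale capacity. -/
def ModifiedAt (k : ℕ) (c₀ : Fin k → ℝ) (j : ℕ → Fin k) (v : ℕ → ℝ)
    (c : ℕ → Fin k → ℝ) (i : ℕ) (e : Fin k) : Prop :=
  c i e ≠ stale k c₀ j v c i e

/-- Step cost of a schedule: the total number of modifications (pairs of a time
`i < n` and an edge `e` whose capacity is modified at time `i`). -/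
noncomputable def stepCost (k n : ℕ) (c₀ : Fin k → ℝ) (j : ℕ → Fin k) (v : ℕ → ℝ)
    (c : ℕ → Fin k → ℝ) : ℕ :=
  ((Finset.range n ×ˢ (Finset.univ : Finset (Fin k))).filter
    (fun q => c q.1 q.2 ≠ stale k c₀ j v c q.1 q.2)).card


noncomputable def minEdge {Δ : ℕ} (h : 0 < Δ) (f : Fin Δ → ℝ) : Fin Δ :=
  (Finset.exists_min_image Finset.univ f ⟨⟨0, h⟩, Finset.mem_univ _⟩).choose

lemma minEdge_le {Δ : ℕ} (h : 0 < Δ) (f : Fin Δ → ℝ) (e : Fin Δ) :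
    f (minEdge h f) ≤ f e :=
  (Finset.exists_min_image Finset.univ f ⟨⟨0, h⟩, Finset.mem_univ _⟩).choose_spec.2 e
    (Finset.mem_univ e)

noncomputable def staleF {Δ : ℕ} (c₀ : Fin Δ → ℝ)
    (A : ℕ → (ℕ → Fin Δ × ℝ) → (Fin Δ → ℝ)) :
    ℕ → (ℕ → Fin Δ × ℝ) → (Fin Δ → ℝ)
  | 0, _ => c₀
  | (m+1), σ => fun e => A m σ e - (if (σ m).1 = e then (σ m).2 else 0)

noncomputable def pre {Δ : ℕ} (h : 0 < Δ) (C ε : ℝ) (c₀ : Fin Δ → ℝ)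
    (A : ℕ → (ℕ → Fin Δ × ℝ) → (Fin Δ → ℝ)) : ℕ → ℕ → Fin Δ × ℝ
  | 0 => fun _ => (⟨0, h⟩, 0)
  | (i+1) => fun m =>
      if m = i then
        (minEdge h (staleF c₀ A i (pre h C ε c₀ A i)),
         cap C (fun l => (pre h C ε c₀ A i l).2) i / Δ + ε)
      else pre h C ε c₀ A i m

lemma pre_agree {Δ : ℕ} (h : 0 < Δ) (C ε : ℝ) (c₀ : Fin Δ → ℝ)
    (A : ℕ → (ℕ → Fin Δ × ℝ) → (Fin Δ → ℝ)) :
    ∀ (d i m : ℕ), m < i → pre h C ε c₀ A (i + d) m = pre h C ε c₀ A i m := by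
  intro d
  induction d with
  | zero => intro i m _; rfl
  | succ d ih =>
    intro i m hm
    have h2 : i + (d+1) = (i+d) + 1 := by omega
    rw [h2]
    show pre h C ε c₀ A ((i+d)+1) m = _
    rw [pre]
    simp only [show m ≠ i + d by omega, if_neg]
    exact ih i m hm

/-- Fix `Δ ≥ 1` and consider the two-node network with `Δ` parallel edges from `v₁`
to `v₂`, initial capital `C > 0` at `v₁` and initial capacities `c₀`.
A deterministic online scheduling algorithm is a map `A` producing, at each time
`i`, the capacities `A i τ : Fin Δ → ℝ` used to serve transaction `i`, depending
only on the transactions `τ 0, …, τ i` seen so far (hypothesis `honline`).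
For every `ε > 0` and every `n` there is a transaction sequence
`τ = (edge, value)` with `value i = C_{v₁}(i)/Δ + ε`, such that whenever `A`'s
response is feasible: the chosen edge of transaction `i` has stale capacity
(capacity under `A` just before time `i`) at most `C_{v₁}(i)/Δ`, the algorithm
performs at least one capacity modification at every time step `i < n`
(namely on the chosen edge), and hence its step cost is at least `n`. -/
theorem no_good_online_algorithm_lower_bound
    (Δ : ℕ) (hΔ : 1 ≤ Δ) (C : ℝ) (hC : 0 < C)
    (c₀ : Fin Δ → ℝ) (hc₀ : ∀ e, 0 ≤ c₀ e) (hc₀sum : (∑ e, c₀ e) ≤ C)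
    (A : ℕ → (ℕ → Fin Δ × ℝ) → (Fin Δ → ℝ))
    (honline : ∀ (i : ℕ) (σ σ' : ℕ → Fin Δ × ℝ),
      (∀ l ≤ i, σ l = σ' l) → A i σ = A i σ')
    (ε : ℝ) (hε : 0 < ε) (n : ℕ) :
    ∃ τ : ℕ → Fin Δ × ℝ,
      (∀ i < n, (τ i).2 = cap C (fun l => (τ l).2) i / Δ + ε) ∧
      (Feasible Δ n C (fun l => (τ l).1) (fun l => (τ l).2) (fun i => A i τ) →
        (∀ i < n,
          stale Δ c₀ (fun l => (τ l).1) (fun l => (τ l).2) (fun i => A i τ) i (τ i).1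
            ≤ cap C (fun l => (τ l).2) i / Δ) ∧
        (∀ i < n,
          ModifiedAt Δ c₀ (fun l => (τ l).1) (fun l => (τ l).2) (fun i => A i τ)
            i (τ i).1) ∧
        n ≤ stepCost Δ n c₀ (fun l => (τ l).1) (fun l => (τ l).2) (fun i => A i τ)) := by
  have hpos : 0 < Δ := hΔ
  set τ : ℕ → Fin Δ × ℝ := fun i => pre hpos C ε c₀ A (i+1) i with hτdef
  have hτpre : ∀ i m, m < i → τ m = pre hpos C ε c₀ A i m := by
    intro i m hm
    have h1 : pre hpos C ε c₀ A ((m+1) + (i - (m+1))) m = pre hpos C ε c₀ A (m+1) m :=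
      pre_agree hpos C ε c₀ A _ (m+1) m (Nat.lt_succ_self m)
    rw [show (m+1) + (i - (m+1)) = i by omega] at h1
    exact h1.symm
  have hcap : ∀ i, cap C (fun l => (pre hpos C ε c₀ A i l).2) i
      = cap C (fun l => (τ l).2) i := by
    intro i
    unfold cap
    congr 1
    refine Finset.sum_congr rfl (fun l hl => ?_)
    show (pre hpos C ε c₀ A i l).2 = (τ l).2
    rw [hτpre i l (Finset.mem_range.mp hl)]
  have hτi : ∀ i, τ i = (minEdge hpos (staleF c₀ A i (pre hpos C ε c₀ A i)),
      cap C (fun l => (τ l).2) i / Δ + ε) := by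
    intro i
    show pre hpos C ε c₀ A (i+1) i = _
    rw [pre]
    beta_reduce
    rw [if_pos rfl, hcap]
  have hstale : ∀ i, staleF c₀ A i (pre hpos C ε c₀ A i)
      = stale Δ c₀ (fun l => (τ l).1) (fun l => (τ l).2) (fun i => A i τ) i := by
    intro i
    cases i with
    | zero => rfl
    | succ m =>
      have hA : A m (pre hpos C ε c₀ A (m+1)) = A m τ :=
        honline m _ _ (fun l hl => (hτpre (m+1) l (by omega)).symm)
      have hm : pre hpos C ε c₀ A (m+1) m = τ m := rfl
      funext e
      show A m (pre hpos C ε c₀ A (m+1)) e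
          - (if (pre hpos C ε c₀ A (m+1) m).1 = e then (pre hpos C ε c₀ A (m+1) m).2 else 0)
        = _
      rw [hA, hm]
      rfl
  refine ⟨τ, fun i _ => by rw [hτi i], fun hF => ?_⟩
  have hvi : ∀ i, (τ i).2 = cap C (fun l => (τ l).2) i / Δ + ε := fun i => by rw [hτi i]
  have hsum : ∀ i ≤ n,
      (∑ e, stale Δ c₀ (fun l => (τ l).1) (fun l => (τ l).2) (fun i => A i τ) i e)
        ≤ cap C (fun l => (τ l).2) i := by
    intro i hi
    cases i with
    | zero =>
      show (∑ e, c₀ e) ≤ cap C (fun l => (τ l).2) 0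
      simpa [cap] using hc₀sum
    | succ m =>
      obtain ⟨_, _, h3⟩ := hF m (by omega)
      have hsplit : (∑ e, stale Δ c₀ (fun l => (τ l).1) (fun l => (τ l).2)
          (fun i => A i τ) (m+1) e)
          = (∑ e, A m τ e) - (τ m).2 := by
        show (∑ e, (A m τ e - if (τ m).1 = e then (τ m).2 else 0)) = _
        rw [Finset.sum_sub_distrib, Finset.sum_ite_eq Finset.univ (τ m).1 (fun _ => (τ m).2)]
        simp
      have hcapsucc : cap C (fun l => (τ l).2) (m+1)
          = cap C (fun l => (τ l).2) m - (τ m).2 := by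
        simp [cap, Finset.sum_range_succ]; ring
      rw [hsplit, hcapsucc]
      exact sub_le_sub_right h3 _
  have hminle : ∀ i ≤ n,
      stale Δ c₀ (fun l => (τ l).1) (fun l => (τ l).2) (fun i => A i τ) i (τ i).1
        ≤ cap C (fun l => (τ l).2) i / Δ := by
    intro i hi
    set s := stale Δ c₀ (fun l => (τ l).1) (fun l => (τ l).2) (fun i => A i τ) i with hs
    have hfst : (τ i).1 = minEdge hpos (staleF c₀ A i (pre hpos C ε c₀ A i)) := by
      rw [hτi i]
    have h1 : ∀ e, s (τ i).1 ≤ s e := by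
      intro e
      have h0 := minEdge_le hpos (staleF c₀ A i (pre hpos C ε c₀ A i)) e
      rw [hfst, hs, ← hstale i]
      exact h0
    have h2 : (Δ : ℝ) * s (τ i).1 ≤ ∑ e, s e := by
      have : (∑ _e : Fin Δ, s (τ i).1) = (Δ : ℝ) * s (τ i).1 := by
        simp [Finset.sum_const, nsmul_eq_mul]
      rw [← this]
      exact Finset.sum_le_sum (fun e _ => h1 e)
    have hΔR : (0:ℝ) < Δ := by exact_mod_cast hpos
    rw [le_div_iff₀ hΔR]
    have := hsum i hi
    nlinarith [this, h2]
  have hmod : ∀ i < n,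
      ModifiedAt Δ c₀ (fun l => (τ l).1) (fun l => (τ l).2) (fun i => A i τ) i (τ i).1 := by
    intro i hi
    obtain ⟨_, h2, _⟩ := hF i hi
    intro heq
    have h2' : (τ i).2 ≤ A i τ (τ i).1 := h2
    have heq' : A i τ (τ i).1
        = stale Δ c₀ (fun l => (τ l).1) (fun l => (τ l).2) (fun i => A i τ) i (τ i).1 := heq
    linarith [h2', heq', hvi i, hminle i (le_of_lt hi), hε]
  refine ⟨fun i hi => hminle i (le_of_lt hi), hmod, ?_⟩
  unfold stepCost
  refine le_trans (le_of_eq (Finset.card_range n).symm) ?_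
  apply Finset.card_le_card_of_injOn (fun i => (i, (τ i).1))
  · intro i hi
    simp only [Finset.mem_coe, Finset.mem_filter, Finset.mem_product, Finset.mem_univ, and_true]
    exact ⟨hi, hmod i (Finset.mem_range.mp hi)⟩
  · intro a _ b _ h
    exact congrArg Prod.fst h
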